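/- Let 𝓛₁, 𝓛₂, 𝓛₃ be finite sets of lines in ℝ³, let D ≥ 1 be an integer, and let P ∈ ℝ[x₁, x₂, x₃] be a nonzero polynomial of degree at most D. Let J' be the set of multijoints x lying on Z(P) = {y ∈ ℝ³ : P(y) = 0} for which there exist l₁ ∈ 𝓛₁, l₂ ∈ 𝓛₂, l₃ ∈ 𝓛₃ through x with linearly independent directions such that l₁ is not contained in Z(P). Then |J'| ≤ min(D·|𝓛₁|, |𝓛₂|·|𝓛₃|), and consequently |J'| ≤ D^{1/2}·(|𝓛₁|·|𝓛₂|·|𝓛₃|)^{1/2}. -/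

import Mathlib

open MvPolynomial

/-- `ℓ` is a line in `ℝⁿ` with direction vector `v`. -/
def IsLineWithDir {n : ℕ} (ℓ : Set (Fin n → ℝ)) (v : Fin n → ℝ) : Prop :=
  v ≠ 0 ∧ ∃ p : Fin n → ℝ, ℓ = {x | ∃ t : ℝ, x = p + t • v}

/-- `ℓ` is a line in `ℝⁿ`. -/
def IsLine {n : ℕ} (ℓ : Set (Fin n → ℝ)) : Prop :=
  ∃ v : Fin n → ℝ, IsLineWithDir ℓ v

/-- The real zero set of a polynomial. -/
def ZeroSet {n : ℕ} (P : MvPolynomial (Fin n) ℝ) : Set (Fin n → ℝ) :=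
  {x | eval x P = 0}

/-- The set of multijoints `x` on `Z(P)` for which some witnessing triple of lines
`l₁ ∈ 𝓛₁`, `l₂ ∈ 𝓛₂`, `l₃ ∈ 𝓛₃` through `x` with linearly independent directions has
`l₁` not contained in `Z(P)`. -/
def JPrime (𝓛₁ 𝓛₂ 𝓛₃ : Finset (Set (Fin 3 → ℝ))) (P : MvPolynomial (Fin 3) ℝ) :
    Set (Fin 3 → ℝ) :=
  {x | x ∈ ZeroSet P ∧
    ∃ l₁ ∈ 𝓛₁, ∃ l₂ ∈ 𝓛₂, ∃ l₃ ∈ 𝓛₃, x ∈ l₁ ∧ x ∈ l₂ ∧ x ∈ l₃ ∧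
      (∃ v : Fin 3 → (Fin 3 → ℝ),
        IsLineWithDir l₁ (v 0) ∧ IsLineWithDir l₂ (v 1) ∧ IsLineWithDir l₃ (v 2) ∧
        LinearIndependent ℝ v) ∧ ¬l₁ ⊆ ZeroSet P}

/-- Multijoints on the zero set of a polynomial whose witnessing line from `𝓛₁` is not
contained in the zero set: `|J'| ≤ min(D|𝓛₁|, |𝓛₂||𝓛₃|)`, hence
`|J'| ≤ D^(1/2)(|𝓛₁||𝓛₂||𝓛₃|)^(1/2)`. -/

lemma natDegree_eval₂_le_totalDegree {n : ℕ} (P : MvPolynomial (Fin n) ℝ)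
    (f : Fin n → Polynomial ℝ) (hf : ∀ i, (f i).natDegree ≤ 1) :
    (MvPolynomial.eval₂ Polynomial.C f P).natDegree ≤ P.totalDegree := by
  rw [MvPolynomial.eval₂_eq]
  refine Polynomial.natDegree_sum_le_of_forall_le _ _ fun d hd => ?_
  calc (Polynomial.C (MvPolynomial.coeff d P) * ∏ i ∈ d.support, f i ^ d i).natDegree
      ≤ (Polynomial.C (MvPolynomial.coeff d P)).natDegree
          + (∏ i ∈ d.support, f i ^ d i).natDegree := Polynomial.natDegree_mul_le
    _ ≤ 0 + ∑ i ∈ d.support, (f i ^ d i).natDegree := by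
        gcongr
        · simp
        · exact Polynomial.natDegree_prod_le _ _
    _ ≤ ∑ i ∈ d.support, d i := by
        rw [zero_add]
        refine Finset.sum_le_sum fun i _ => ?_
        calc (f i ^ d i).natDegree ≤ d i * (f i).natDegree := Polynomial.natDegree_pow_le
          _ ≤ d i * 1 := by gcongr; exact hf i
          _ = d i := mul_one _
    _ ≤ P.totalDegree := MvPolynomial.le_totalDegree hd

lemma line_inter_zeroSet {ℓ : Set (Fin 3 → ℝ)} {v : Fin 3 → ℝ}
    (h : IsLineWithDir ℓ v) (P : MvPolynomial (Fin 3) ℝ) (hns : ¬ ℓ ⊆ ZeroSet P)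
    {D : ℕ} (hdeg : P.totalDegree ≤ D) :
    (ℓ ∩ ZeroSet P).Finite ∧ (ℓ ∩ ZeroSet P).ncard ≤ D := by
  obtain ⟨hv, p, rfl⟩ := h
  set f : Fin 3 → Polynomial ℝ := fun i => Polynomial.C (p i) + Polynomial.C (v i) * Polynomial.X
    with hfdef
  set q : Polynomial ℝ := MvPolynomial.eval₂ Polynomial.C f P with hq
  have heval : ∀ t : ℝ, q.eval t = MvPolynomial.eval (p + t • v) P := by
    intro t
    have h1 := MvPolynomial.eval₂_comp_left (Polynomial.evalRingHom t) Polynomial.C f P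
    have h2 : (Polynomial.evalRingHom t).comp Polynomial.C = RingHom.id ℝ := by
      ext a; simp
    have h3 : (Polynomial.evalRingHom t) ∘ f = fun i => (p + t • v) i := by
      funext i; simp [hfdef]; ring
    rw [h2, h3] at h1
    rw [MvPolynomial.eval₂_id] at h1
    exact h1
  have hq0 : q ≠ 0 := by
    rw [Set.not_subset] at hns
    obtain ⟨x, ⟨t0, rfl⟩, hx2⟩ := hns
    intro h0
    exact hx2 ((heval t0).symm.trans (by rw [h0]; simp) : _)
  have hdq : q.natDegree ≤ D := by
    refine le_trans (natDegree_eval₂_le_totalDegree P f fun i => ?_) hdeg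
    simp only [hfdef]
    compute_degree
  have hsub : {x | ∃ t : ℝ, x = p + t • v} ∩ ZeroSet P ⊆
      (fun t : ℝ => p + t • v) '' (q.roots.toFinset : Set ℝ) := by
    rintro x ⟨⟨t, rfl⟩, hxz⟩
    refine ⟨t, ?_, rfl⟩
    simp only [Finset.coe_sort_coe, Multiset.mem_toFinset, Finset.mem_coe]
    rw [Polynomial.mem_roots hq0]
    exact (heval t).trans hxz
  have hfin' : ((fun t : ℝ => p + t • v) '' (q.roots.toFinset : Set ℝ)).Finite :=
    (q.roots.toFinset.finite_toSet).image _
  refine ⟨hfin'.subset hsub, ?_⟩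
  calc ({x | ∃ t : ℝ, x = p + t • v} ∩ ZeroSet P).ncard
      ≤ ((fun t : ℝ => p + t • v) '' (q.roots.toFinset : Set ℝ)).ncard :=
        Set.ncard_le_ncard hsub hfin'
    _ ≤ ((q.roots.toFinset : Set ℝ)).ncard := Set.ncard_image_le (q.roots.toFinset.finite_toSet)
    _ = q.roots.toFinset.card := Set.ncard_coe_finset _
    _ ≤ Multiset.card q.roots := Multiset.toFinset_card_le _
    _ ≤ q.natDegree := Polynomial.card_roots' q
    _ ≤ D := hdq

lemma dir_smul {l : Set (Fin 3 → ℝ)} {a b : Fin 3 → ℝ}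
    (ha : IsLineWithDir l a) (hb : IsLineWithDir l b) : ∃ c : ℝ, b = c • a := by
  obtain ⟨ha0, p, rfl⟩ := ha
  obtain ⟨hb0, p', hset⟩ := hb
  have h1 : p' ∈ {x | ∃ t : ℝ, x = p + t • a} := by
    rw [hset]; exact ⟨0, by simp⟩
  have h2 : p' + b ∈ {x | ∃ t : ℝ, x = p + t • a} := by
    rw [hset]; exact ⟨1, by simp⟩
  obtain ⟨t0, h1⟩ := h1
  obtain ⟨t1, h2⟩ := h2
  refine ⟨t1 - t0, ?_⟩
  have : p' + b - p' = (p + t1 • a) - (p + t0 • a) := by rw [← h1, ← h2]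
  rw [sub_smul]
  rw [add_sub_cancel_left] at this
  rw [this]; abel

lemma line_eq_of_two_points {l : Set (Fin 3 → ℝ)} {v x y : Fin 3 → ℝ}
    (h : IsLineWithDir l v) (hx : x ∈ l) (hy : y ∈ l) (hxy : x ≠ y) :
    l = {z | ∃ s : ℝ, z = x + s • (y - x)} := by
  obtain ⟨hv, p, rfl⟩ := h
  obtain ⟨t0, hx⟩ := hx
  obtain ⟨t1, hy⟩ := hy
  have hyx : y - x = (t1 - t0) • v := by
    rw [hx, hy, sub_smul]; abel
  have hne : t1 - t0 ≠ 0 := by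
    intro h0
    exact hxy (by rw [hx, hy, show t1 = t0 by linarith])
  ext z
  constructor
  · rintro ⟨t, rfl⟩
    refine ⟨(t - t0) / (t1 - t0), ?_⟩
    rw [hyx, smul_smul, div_mul_cancel₀ _ hne, hx, sub_smul]
    abel
  · rintro ⟨s, rfl⟩
    refine ⟨t0 + s * (t1 - t0), ?_⟩
    rw [hyx, smul_smul, hx, add_smul]
    abel

lemma not_parallel {v : Fin 3 → (Fin 3 → ℝ)} (hli : LinearIndependent ℝ v) (c : ℝ) :
    v 2 ≠ c • v 1 := by
  intro h
  have key := Fintype.linearIndependent_iff.mp hli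
    (fun i => if i = 1 then c else if i = 2 then (-1 : ℝ) else 0) ?_ 2
  · rw [if_neg (by decide), if_pos rfl] at key
    norm_num at key
  · rw [Fin.sum_univ_three]
    norm_num [h]
    simp

theorem multijoints_on_zero_set (𝓛₁ 𝓛₂ 𝓛₃ : Finset (Set (Fin 3 → ℝ)))
    (h₁ : ∀ ℓ ∈ 𝓛₁, IsLine ℓ) (h₂ : ∀ ℓ ∈ 𝓛₂, IsLine ℓ) (h₃ : ∀ ℓ ∈ 𝓛₃, IsLine ℓ)
    (D : ℕ) (hD : 1 ≤ D) (P : MvPolynomial (Fin 3) ℝ) (hP : P ≠ 0)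
    (hdeg : P.totalDegree ≤ D) :
    (JPrime 𝓛₁ 𝓛₂ 𝓛₃ P).Finite ∧
    ((JPrime 𝓛₁ 𝓛₂ 𝓛₃ P).ncard : ℝ) ≤
      min ((D : ℝ) * 𝓛₁.card) ((𝓛₂.card : ℝ) * 𝓛₃.card) ∧
    ((JPrime 𝓛₁ 𝓛₂ 𝓛₃ P).ncard : ℝ) ≤
      (D : ℝ) ^ ((1 : ℝ) / 2) * ((𝓛₁.card : ℝ) * 𝓛₂.card * 𝓛₃.card) ^ ((1 : ℝ) / 2) := by
    classical
  have key : ∀ l ∈ 𝓛₁, ¬ l ⊆ ZeroSet P → (l ∩ ZeroSet P).Finite ∧ (l ∩ ZeroSet P).ncard ≤ D := by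
    intro l hl hns
    obtain ⟨v, hv⟩ := h₁ l hl
    exact line_inter_zeroSet hv P hns hdeg
  choose! f hf1 g hg1 k hk1 hxf hxg hxk hind hnsub using
    fun x (hx : x ∈ JPrime 𝓛₁ 𝓛₂ 𝓛₃ P) => hx.2
  -- finiteness
  have hfin : (JPrime 𝓛₁ 𝓛₂ 𝓛₃ P).Finite := by
    have hs : JPrime 𝓛₁ 𝓛₂ 𝓛₃ P ⊆
        ⋃ l ∈ {l ∈ (𝓛₁ : Set (Set (Fin 3 → ℝ))) | ¬ l ⊆ ZeroSet P}, (l ∩ ZeroSet P) := by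
      intro x hx
      exact Set.mem_biUnion ⟨hf1 x hx, hnsub x hx⟩ ⟨hxf x hx, hx.1⟩
    refine Set.Finite.subset (Set.Finite.biUnion ?_ ?_) hs
    · exact 𝓛₁.finite_toSet.subset (Set.sep_subset _ _)
    · rintro l ⟨hl, hns⟩
      exact (key l hl hns).1
  set Jfin : Finset (Fin 3 → ℝ) := hfin.toFinset with hJfin
  have hNcard : (JPrime 𝓛₁ 𝓛₂ 𝓛₃ P).ncard = Jfin.card := by
    rw [Set.ncard_eq_toFinset_card _ hfin]
  -- bound 1
  have b1 : Jfin.card ≤ D * 𝓛₁.card := by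
    refine Finset.card_le_mul_card_image_of_maps_to
      (f := f) (fun x hx => hf1 x (hfin.mem_toFinset.mp hx)) D ?_
    intro l hl
    rcases (Jfin.filter fun x => f x = l).eq_empty_or_nonempty with he | ⟨x0, hx0⟩
    · calc _ = 0 := Finset.card_eq_zero.mpr (by convert he)
        _ ≤ D := Nat.zero_le D
    · have hx0' := Finset.mem_filter.mp hx0
      have hxJ := hfin.mem_toFinset.mp hx0'.1
      have hns : ¬ l ⊆ ZeroSet P := hx0'.2 ▸ hnsub x0 hxJ
      have hKl := key l hl hns
      have hsub : ((Jfin.filter fun x => f x = l : Finset _) : Set (Fin 3 → ℝ))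
          ⊆ l ∩ ZeroSet P := by
        intro y hy
        simp only [Finset.coe_filter, Set.mem_setOf_eq] at hy
        obtain ⟨hyJ, hyl⟩ := hy
        have hyJ' := hfin.mem_toFinset.mp hyJ
        exact ⟨hyl ▸ hxf y hyJ', hyJ'.1⟩
      calc (Jfin.filter fun x => f x = l).card
          = ((Jfin.filter fun x => f x = l : Finset _) : Set (Fin 3 → ℝ)).ncard :=
            (Set.ncard_coe_finset _).symm
        _ ≤ (l ∩ ZeroSet P).ncard := Set.ncard_le_ncard hsub hKl.1
        _ ≤ D := hKl.2
  -- bound 2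
  have b2 : Jfin.card ≤ 𝓛₂.card * 𝓛₃.card := by
    have hinj : Set.InjOn (fun x => (g x, k x)) ↑Jfin := by
      intro x hx y hy hxy
      by_contra hne
      have hxJ := hfin.mem_toFinset.mp hx
      have hyJ := hfin.mem_toFinset.mp hy
      have hgg : g x = g y := congrArg Prod.fst hxy
      have hkk : k x = k y := congrArg Prod.snd hxy
      obtain ⟨v, hv0, hv1, hv2, hli⟩ := hind x hxJ
      have hxg2 : x ∈ g x := hxg x hxJ
      have hyg2 : y ∈ g x := hgg ▸ hxg y hyJ
      have hxk2 : x ∈ k x := hxk x hxJ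
      have hyk2 : y ∈ k x := hkk ▸ hxk y hyJ
      have e2 := line_eq_of_two_points hv1 hxg2 hyg2 hne
      have e3 := line_eq_of_two_points hv2 hxk2 hyk2 hne
      have hgk : g x = k x := e2.trans e3.symm
      obtain ⟨c, hc⟩ := dir_smul hv1 (hgk ▸ hv2)
      exact not_parallel hli c hc
    calc Jfin.card = (Jfin.image fun x => (g x, k x)).card :=
          (Finset.card_image_of_injOn hinj).symm
      _ ≤ (𝓛₂ ×ˢ 𝓛₃).card := by
          refine Finset.card_le_card ?_
          intro z hz
          obtain ⟨x, hx, rfl⟩ := Finset.mem_image.mp hz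
          have hxJ := hfin.mem_toFinset.mp hx
          exact Finset.mem_product.mpr ⟨hg1 x hxJ, hk1 x hxJ⟩
      _ = 𝓛₂.card * 𝓛₃.card := Finset.card_product _ _
  -- conclude
  have hN1 : ((JPrime 𝓛₁ 𝓛₂ 𝓛₃ P).ncard : ℝ) ≤ (D : ℝ) * 𝓛₁.card := by
    rw [hNcard]
    exact_mod_cast Nat.cast_le.mpr b1
  have hN2 : ((JPrime 𝓛₁ 𝓛₂ 𝓛₃ P).ncard : ℝ) ≤ (𝓛₂.card : ℝ) * 𝓛₃.card := by
    rw [hNcard]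
    exact_mod_cast Nat.cast_le.mpr b2
  refine ⟨hfin, le_min hN1 hN2, ?_⟩
  rw [← Real.sqrt_eq_rpow, ← Real.sqrt_eq_rpow]
  set a : ℝ := (D : ℝ) * 𝓛₁.card
  set b : ℝ := (𝓛₂.card : ℝ) * 𝓛₃.card
  have h0a : (0:ℝ) ≤ a := by positivity
  have h0m : (0:ℝ) ≤ min a b := le_min h0a (by positivity)
  calc ((JPrime 𝓛₁ 𝓛₂ 𝓛₃ P).ncard : ℝ) ≤ min a b := le_min hN1 hN2
    _ = Real.sqrt (min a b * min a b) := (Real.sqrt_mul_self h0m).symm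
    _ ≤ Real.sqrt (a * b) :=
        Real.sqrt_le_sqrt (mul_le_mul (min_le_left _ _) (min_le_right _ _) h0m h0a)
    _ = Real.sqrt ((D : ℝ) * ((𝓛₁.card : ℝ) * 𝓛₂.card * 𝓛₃.card)) := by
        congr 1; simp only [a, b]; ring
    _ = Real.sqrt (D : ℝ) * Real.sqrt ((𝓛₁.card : ℝ) * 𝓛₂.card * 𝓛₃.card) :=
        Real.sqrt_mul (by positivity) _
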